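/- Let E be a measurable space, let G be a finite group acting measurably on E, and let Z be a random element of E such that g·Z has the same distribution as Z for every g ∈ G. Let S : E → ℝ be measurable and assume that almost surely the values (S(g·Z))_{g ∈ G} are pairwise distinct. Then for every r ∈ {1, …, |G|}, P( S(Z) = S^{(r)}(Z) ) = 1/|G|, where S^{(r)}(Z) denotes the r-th smallest value of the family (S(g·Z))_{g ∈ G}; that is, the rank of S(Z) within its G-orbit of scores is uniformly distributed on {1, …, |G|}. -/

import Mathlib

open MeasureTheory


open Finset in
lemma card_filter_lt_sort_getElem (F : Finset ℝ) (i : ℕ) (hi : i < (F.sort (· ≤ ·)).length) :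
    (F.filter (· < (F.sort (· ≤ ·))[i])).card = i := by
  classical
  set L := F.sort (· ≤ ·) with hL
  have hs : L.Pairwise (· < ·) :=
    ((F.pairwise_sort (· ≤ ·)).and (F.sort_nodup _)).imp fun h => lt_of_le_of_ne h.1 h.2
  have hmono : StrictMono L.get := hs.sortedLT.strictMono_get
  have key : F.filter (· < L[i]) = (Finset.range i).image (fun j => L.getD j 0) := by
    ext y
    simp only [Finset.mem_filter, Finset.mem_image, Finset.mem_range]
    constructor
    · rintro ⟨hyF, hy⟩
      have : y ∈ L := (Finset.mem_sort (α := ℝ) (· ≤ ·)).2 hyF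
      obtain ⟨j, hj, rfl⟩ := List.mem_iff_getElem.1 this
      have hji : j < i := by
        by_contra h
        push_neg at h
        have : L[i] ≤ L[j] := by
          rcases eq_or_lt_of_le h with h' | h'
          · simp [h']
          · exact le_of_lt (hmono (a := ⟨i, hi⟩) (b := ⟨j, hj⟩) h')
        exact absurd hy (not_lt.2 this)
      exact ⟨j, hji, by simp [List.getD_eq_getElem, hj]⟩
    · rintro ⟨j, hj, rfl⟩
      have hjL : j < L.length := lt_trans hj hi
      rw [List.getD_eq_getElem L 0 hjL]
      exact ⟨(Finset.mem_sort (α := ℝ) (· ≤ ·)).1 (L.getElem_mem hjL),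
        hmono (a := ⟨j, hjL⟩) (b := ⟨i, hi⟩) hj⟩
  rw [key, Finset.card_image_of_injOn, Finset.card_range]
  intro a ha b hb hab
  simp only [Finset.coe_range, Set.mem_Iio] at ha hb
  have ha' : a < L.length := lt_trans ha hi
  have hb' : b < L.length := lt_trans hb hi
  simp only [List.getD_eq_getElem _ _ ha', List.getD_eq_getElem _ _ hb'] at hab
  by_contra h
  rcases lt_or_gt_of_ne h with h' | h'
  · exact absurd hab (ne_of_lt (hmono (a := ⟨a, ha'⟩) (b := ⟨b, hb'⟩) h'))
  · exact absurd hab.symm (ne_of_lt (hmono (a := ⟨b, hb'⟩) (b := ⟨a, ha'⟩) h'))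

lemma sort_getD_eq_iff_aux (F : Finset ℝ) (x : ℝ) (k : ℕ) (hx : x ∈ F) (hk : k < F.card) :
    ((F.sort (· ≤ ·)).getD k 0 = x) ↔ (F.filter (· < x)).card = k := by
  classical
  have hk' : k < (F.sort (· ≤ ·)).length := by rw [Finset.length_sort]; exact hk
  rw [List.getD_eq_getElem _ _ hk']
  constructor
  · rintro rfl; exact card_filter_lt_sort_getElem F k hk'
  · intro h
    have hxL : x ∈ F.sort (· ≤ ·) := (Finset.mem_sort _).2 hx
    obtain ⟨i, hi, rfl⟩ := List.mem_iff_getElem.1 hxL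
    have h2 := card_filter_lt_sort_getElem F i hi
    have : k = i := by rw [← h, h2]
    subst this; rfl

lemma existsUnique_rank {G : Type*} [Fintype G] (v : G → ℝ) (hv : Function.Injective v)
    (k : ℕ) (hk : k < Fintype.card G) :
    ∃! g : G, (Finset.univ.filter fun g' => v g' < v g).card = k := by
  classical
  have hb : ∀ g : G, (Finset.univ.filter fun g' => v g' < v g).card < Fintype.card G := by
    intro g
    rw [← Finset.card_univ]
    apply Finset.card_lt_card
    rw [Finset.filter_ssubset]
    exact ⟨g, Finset.mem_univ g, lt_irrefl _⟩
  have hmono : ∀ a b : G, v a < v b →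
      (Finset.univ.filter fun g' => v g' < v a).card
        < (Finset.univ.filter fun g' => v g' < v b).card := by
    intro a b hab
    apply Finset.card_lt_card
    rw [Finset.ssubset_iff_of_subset
      (Finset.monotone_filter_right _ fun g' _ hg' => lt_trans hg' hab)]
    exact ⟨a, Finset.mem_filter.2 ⟨Finset.mem_univ a, hab⟩,
      fun hmem => lt_irrefl _ (Finset.mem_filter.1 hmem).2⟩
  set R : G → Fin (Fintype.card G) := fun g => ⟨_, hb g⟩ with hR
  have hinj : Function.Injective R := by
    intro a b hab
    have hcard : (Finset.univ.filter fun g' => v g' < v a).card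
        = (Finset.univ.filter fun g' => v g' < v b).card := congrArg Fin.val hab
    rcases lt_trichotomy (v a) (v b) with h | h | h
    · exact absurd hcard (ne_of_lt (hmono a b h))
    · exact hv h
    · exact absurd hcard.symm (ne_of_lt (hmono b a h))
  have hbij : Function.Bijective R :=
    (Fintype.bijective_iff_injective_and_card R).2 ⟨hinj, by simp⟩
  have := hbij.existsUnique ⟨k, hk⟩
  refine (existsUnique_congr fun g => ?_).1 this
  rw [hR]
  exact ⟨fun h => congrArg Fin.val h, fun h => Fin.ext h⟩

lemma card_filter_mul_right {G : Type*} [Group G] [Fintype G] (f : G → ℝ) (g : G) (x : ℝ) :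
    (Finset.univ.filter fun g' : G => f (g' * g) < x).card
      = (Finset.univ.filter fun h : G => f h < x).card := by
  classical
  apply Finset.card_equiv (Equiv.mulRight g)
  intro a
  simp [Equiv.mulRight]

lemma measurableSet_rank {E G : Type*} [MeasurableSpace E] [Group G] [Fintype G] [MulAction G E]
    (hact : ∀ g : G, Measurable fun z : E => g • z) {S : E → ℝ} (hS : Measurable S) (k : ℕ) :
    MeasurableSet {z : E | (Finset.univ.filter fun g' : G => S (g' • z) < S z).card = k} := by
  classical
  have h1 : ∀ g' : G, MeasurableSet {z : E | S (g' • z) < S z} :=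
    fun g' => measurableSet_lt (hS.comp (hact g')) hS
  have heq : {z : E | (Finset.univ.filter fun g' : G => S (g' • z) < S z).card = k}
      = ⋃ T ∈ {T : Finset G | T.card = k}, ⋂ g' : G, {z : E | g' ∈ T ↔ S (g' • z) < S z} := by
    ext z
    simp only [Set.mem_setOf_eq, Set.mem_iUnion, Set.mem_iInter, exists_prop]
    constructor
    · intro h
      exact ⟨Finset.univ.filter fun g' : G => S (g' • z) < S z, h, fun g' => by simp⟩
    · rintro ⟨T, hT, h⟩
      have : T = Finset.univ.filter fun g' : G => S (g' • z) < S z := by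
        ext g'; simp [h g']
      rw [← this]; exact hT
  rw [heq]
  refine MeasurableSet.biUnion (Set.to_countable _) fun T _ => MeasurableSet.iInter fun g' => ?_
  by_cases hg : g' ∈ T
  · simp only [hg, true_iff]
    exact h1 g'
  · simp only [hg, false_iff]
    exact (h1 g').compl
/-- For a finite group `G` acting measurably on `E`, a random element `Z` whose law is
invariant under the action, and a measurable score `S` whose values over the orbit of `Z`
are a.s. pairwise distinct, the rank of `S(Z)` within the orbit scores `(S(g•Z))_{g ∈ G}`
is uniform: for every `r ∈ {1, …, |G|}`, the probability that `S(Z)` equals the `r`-th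
smallest orbit score is `1/|G|`. -/
theorem rank_within_orbit_uniform
    {E : Type*} [MeasurableSpace E] {G : Type*} [Group G] [Fintype G] [MulAction G E]
    (hact : ∀ g : G, Measurable fun z : E => g • z)
    {Ω : Type*} [MeasurableSpace Ω] (P : Measure Ω) [IsProbabilityMeasure P]
    (Z : Ω → E) (hZ : Measurable Z)
    (hinv : ∀ g : G, Measure.map (fun ω => g • Z ω) P = Measure.map Z P)
    (S : E → ℝ) (hS : Measurable S)
    (hdist : ∀ᵐ ω ∂P, ∀ g g' : G, S (g • Z ω) = S (g' • Z ω) → g = g') :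
    ∀ r : ℕ, 1 ≤ r → r ≤ Fintype.card G →
      (P {ω | S (Z ω) =
          ((Multiset.map (fun g : G => S (g • Z ω)) Finset.univ.val).sort (· ≤ ·)).getD
            (r - 1) 0}).toReal = 1 / (Fintype.card G : ℝ) := by
  classical
  intro r hr1 hr2
  set n := Fintype.card G with hn
  set k := r - 1 with hkdef
  have hk : k < n := by omega
  set A : Set E := {z : E | (Finset.univ.filter fun g' : G => S (g' • z) < S z).card = k}
    with hA
  have hAmeas : MeasurableSet A := measurableSet_rank hact hS k
  have hmg : ∀ g : G, Measurable fun ω => g • Z ω := fun g => (hact g).comp hZ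
  set C : G → Set Ω := fun g => (fun ω => g • Z ω) ⁻¹' A with hC
  have hCmeas : ∀ g, MeasurableSet (C g) := fun g => (hmg g) hAmeas
  have hCP : ∀ g, P (C g) = P (Z ⁻¹' A) := by
    intro g
    calc P ((fun ω => g • Z ω) ⁻¹' A)
        = Measure.map (fun ω => g • Z ω) P A := (Measure.map_apply (hmg g) hAmeas).symm
      _ = Measure.map Z P A := by rw [hinv g]
      _ = P (Z ⁻¹' A) := Measure.map_apply hZ hAmeas
  set D : Set Ω := {ω | ∀ g g' : G, S (g • Z ω) = S (g' • Z ω) → g = g'} with hD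
  have hDmeas : MeasurableSet D := by
    have hDeq : D = ⋂ (g : G) (g' : G), {ω : Ω | S (g • Z ω) = S (g' • Z ω) → g = g'} := by
      ext ω; simp [hD, Set.mem_iInter]
    rw [hDeq]
    refine MeasurableSet.iInter fun g => MeasurableSet.iInter fun g' => ?_
    by_cases hgg : g = g'
    · subst hgg; simp
    · have : {ω : Ω | S (g • Z ω) = S (g' • Z ω) → g = g'}
          = {ω : Ω | S (g • Z ω) = S (g' • Z ω)}ᶜ := by
        ext ω; simp [hgg]
      rw [this]
      exact (measurableSet_eq_fun (hS.comp (hmg g)) (hS.comp (hmg g'))).compl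
  have hDc : P Dᶜ = 0 := by
    have hset : Dᶜ = {ω | ¬ ∀ g g' : G, S (g • Z ω) = S (g' • Z ω) → g = g'} := by
      ext ω; simp [hD]
    rw [hset]; exact ae_iff.mp hdist
  have hPD : P D = 1 := by
    exact (prob_compl_eq_zero_iff (μ := P) hDmeas).mp hDc
  have hfullinter : ∀ s : Set Ω, P (s ∩ D) = P s := by
    intro s
    refine le_antisymm (measure_mono Set.inter_subset_left) ?_
    calc P s = P (s ∩ D ∪ s ∩ Dᶜ) := by rw [Set.inter_union_compl]
      _ ≤ P (s ∩ D) + P (s ∩ Dᶜ) := measure_union_le _ _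
      _ ≤ P (s ∩ D) + P Dᶜ := add_le_add le_rfl (measure_mono Set.inter_subset_right)
      _ = P (s ∩ D) := by rw [hDc, add_zero]
  have hCmem : ∀ (ω : Ω) (g : G), ω ∈ C g ↔
      (Finset.univ.filter fun h : G => S (h • Z ω) < S (g • Z ω)).card = k := by
    intro ω g
    have h1 : (Finset.univ.filter fun g' : G => S (g' • (g • Z ω)) < S (g • Z ω))
        = Finset.univ.filter fun g' : G => S ((g' * g) • Z ω) < S (g • Z ω) := by
      apply Finset.filter_congr
      intro g' _
      rw [smul_smul]
    simp only [hC, Set.mem_preimage, hA, Set.mem_setOf_eq]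
    rw [h1, card_filter_mul_right (fun h => S (h • Z ω)) g (S (g • Z ω))]
  have keyU : ∀ ω ∈ D, ∃! g : G, ω ∈ C g := by
    intro ω hω
    have hv : Function.Injective fun g : G => S (g • Z ω) := fun a b h => hω a b h
    have h := existsUnique_rank (fun g : G => S (g • Z ω)) hv k hk
    exact (existsUnique_congr fun g => (hCmem ω g).symm).1 h
  have hUnion : ⋃ g : G, (C g ∩ D) = D := by
    apply Set.Subset.antisymm
    · exact Set.iUnion_subset fun g => Set.inter_subset_right
    · intro ω hω
      obtain ⟨g, hg, -⟩ := keyU ω hω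
      exact Set.mem_iUnion.2 ⟨g, hg, hω⟩
  have hdisj : Pairwise (Function.onFun Disjoint fun g : G => C g ∩ D) := by
    intro a b hab
    rw [Function.onFun, Set.disjoint_left]
    rintro ω ⟨ha, hωD⟩ ⟨hb, -⟩
    obtain ⟨g, -, hgu⟩ := keyU ω hωD
    exact hab ((hgu a ha).trans (hgu b hb).symm)
  have hsum : ∑' g : G, P (C g ∩ D) = 1 := by
    rw [← measure_iUnion hdisj fun g => (hCmeas g).inter hDmeas, hUnion, hPD]
  have hnc : (n : ENNReal) * P (Z ⁻¹' A) = 1 := by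
    rw [tsum_fintype] at hsum
    calc (n : ENNReal) * P (Z ⁻¹' A) = ∑ _g : G, P (Z ⁻¹' A) := by
          rw [Finset.sum_const, Finset.card_univ, nsmul_eq_mul, hn]
      _ = ∑ g : G, P (C g ∩ D) := Finset.sum_congr rfl fun g _ => by
          rw [hfullinter (C g), hCP g]
      _ = 1 := hsum
  have htar : {ω | S (Z ω) =
          ((Multiset.map (fun g : G => S (g • Z ω)) Finset.univ.val).sort (· ≤ ·)).getD
            (r - 1) 0} ∩ D = (Z ⁻¹' A) ∩ D := by
    ext ω
    simp only [Set.mem_inter_iff, Set.mem_setOf_eq, Set.mem_preimage, hA]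
    refine and_congr_left fun hωD => ?_
    have hv : Function.Injective fun g : G => S (g • Z ω) := fun a b h => hωD a b h
    set F := Finset.univ.image fun g : G => S (g • Z ω) with hF
    have hFval : Multiset.map (fun g : G => S (g • Z ω)) Finset.univ.val = F.val :=
      (Finset.image_val_of_injOn hv.injOn).symm
    have hFcard : F.card = n := by
      rw [hF, Finset.card_image_of_injective _ hv, Finset.card_univ]
    have hxF : S (Z ω) ∈ F := Finset.mem_image.2 ⟨1, Finset.mem_univ 1, by rw [one_smul]⟩
    rw [hFval]
    have hsort : (Multiset.sort F.val (· ≤ ·)) = F.sort (· ≤ ·) := by rw [Finset.sort_val]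
    rw [hsort, eq_comm, ← hkdef,
      sort_getD_eq_iff_aux F (S (Z ω)) k hxF (by rw [hFcard]; exact hk)]
    have hfilt : F.filter (· < S (Z ω))
        = (Finset.univ.filter fun g' : G => S (g' • Z ω) < S (Z ω)).image
            fun g : G => S (g • Z ω) := by
      rw [hF, Finset.filter_image]
    rw [hfilt, Finset.card_image_of_injective _ hv]
  have hPtar : P {ω | S (Z ω) =
          ((Multiset.map (fun g : G => S (g • Z ω)) Finset.univ.val).sort (· ≤ ·)).getD
            (r - 1) 0} = P (Z ⁻¹' A) := by
    rw [← hfullinter, htar, hfullinter]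
  rw [hPtar]
  have hn0 : (n : ℝ) ≠ 0 := by
    have : 0 < n := lt_of_lt_of_le hr1 hr2
    positivity
  have htr := congrArg ENNReal.toReal hnc
  rw [ENNReal.toReal_mul, ENNReal.toReal_natCast, ENNReal.toReal_one] at htr
  rw [eq_div_iff hn0]
  linarith [htr]
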